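/- Let N = 2P+2X+S-1 ≤ q and α ∈ 𝔽_q^N with distinct entries. Then RS_{P+2X-1}(α)^⊥ = GRS_{P+S}(α,ω) contains a nonzero codeword λ of Hamming weight exactly P+2X that is not in RS_{P+2X}(α)^⊥ = GRS_{P+S-1}(α,ω). -/

import Mathlib

noncomputable def GRS {F : Type*} [Field F] {n : ℕ} (k : ℕ) (α ν : Fin n → F) :
    Submodule F (Fin n → F) :=
  Submodule.map
    ({ toFun := fun f i => ν i * Polynomial.eval (α i) f
       map_add' := by intros; funext i; simp [mul_add]
       map_smul' := by intros f g; funext i; simp [Polynomial.eval_smul]; ring } :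
      Polynomial F →ₗ[F] (Fin n → F))
    (Polynomial.degreeLT F k)

def dualCode {F : Type*} [Field F] {n : ℕ} (C : Submodule F (Fin n → F)) :
    Submodule F (Fin n → F) where
  carrier := {x | ∀ c ∈ C, ∑ i, x i * c i = 0}
  zero_mem' := by intro c hc; simp
  add_mem' := by
    intro a b ha hb c hc
    simp only [Pi.add_apply, add_mul, Finset.sum_add_distrib, ha c hc, hb c hc, add_zero]
  smul_mem' := by
    intro r a ha c hc
    simp only [Pi.smul_apply, smul_eq_mul, mul_assoc, ← Finset.mul_sum, ha c hc, mul_zero]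

def starProd {F : Type*} [Field F] {n : ℕ} (C D : Submodule F (Fin n → F)) :
    Submodule F (Fin n → F) :=
  Submodule.span F {x | ∃ c ∈ C, ∃ d ∈ D, x = fun i => c i * d i}

open Polynomial Finset

section Aux

variable {F : Type*} [Field F]

/-- The evaluation linear map used in `GRS`. -/
noncomputable def evalMap {n : ℕ} (α ν : Fin n → F) : Polynomial F →ₗ[F] (Fin n → F) :=
  { toFun := fun f i => ν i * Polynomial.eval (α i) f
    map_add' := by intros; funext i; simp [mul_add]
    map_smul' := by intros f g; funext i; simp [Polynomial.eval_smul]; ring }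

lemma coeff_basis_top {n : ℕ} (α : Fin n → F) (i : Fin n) :
    (Lagrange.basis Finset.univ α i).coeff (n - 1) = Lagrange.nodalWeight Finset.univ α i := by
  rw [Lagrange.basis_eq_prod_sub_inv_mul_nodal_div (mem_univ i),
    ← Lagrange.nodal_erase_eq_nodal_div (mem_univ i), coeff_C_mul]
  have hdeg : (Lagrange.nodal ((univ : Finset (Fin n)).erase i) α).natDegree = n - 1 := by
    rw [Lagrange.natDegree_nodal, card_erase_of_mem (mem_univ i), card_univ, Fintype.card_fin]
  rw [← hdeg, Lagrange.nodal_monic.coeff_natDegree, mul_one]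

lemma sum_nodalWeight_eval {n : ℕ} (α : Fin n → F) (hα : Function.Injective α)
    (h : F[X]) (hd : h.degree < ((n - 1 : ℕ) : WithBot ℕ)) :
    ∑ i, Lagrange.nodalWeight Finset.univ α i * h.eval (α i) = 0 := by
  have hdn : h.degree < (#(univ : Finset (Fin n)) : WithBot ℕ) := by
    rw [card_univ, Fintype.card_fin]
    exact lt_of_lt_of_le hd (by exact_mod_cast Nat.sub_le n 1)
  have hint := Lagrange.eq_interpolate (v := α) hα.injOn hdn
  have hco := congrArg (fun p => p.coeff (n - 1)) hint
  simp only [Lagrange.interpolate_apply, finset_sum_coeff, coeff_C_mul] at hco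
  rw [coeff_eq_zero_of_degree_lt hd] at hco
  calc ∑ i, Lagrange.nodalWeight Finset.univ α i * h.eval (α i)
      = ∑ i, h.eval (α i) * (Lagrange.basis Finset.univ α i).coeff (n - 1) :=
        Finset.sum_congr rfl fun i _ => by rw [coeff_basis_top α, mul_comm]
    _ = 0 := hco.symm

lemma eval_eq_zero_poly {n : ℕ} (α : Fin n → F) (hα : Function.Injective α) {f : F[X]}
    (hf : f.degree < (n : WithBot ℕ)) (hz : ∀ i, f.eval (α i) = 0) : f = 0 := by
  have hdn : f.degree < (#(univ : Finset (Fin n)) : WithBot ℕ) := by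
    rwa [card_univ, Fintype.card_fin]
  have hint := Lagrange.eq_interpolate (v := α) hα.injOn hdn
  rw [hint]
  simp [Lagrange.interpolate_apply, hz]

lemma mem_GRS_iff {n k : ℕ} (α ν : Fin n → F) (x : Fin n → F) :
    x ∈ GRS k α ν ↔ ∃ f : F[X], f.degree < (k : WithBot ℕ) ∧ ∀ i, x i = ν i * f.eval (α i) := by
  simp only [GRS, Submodule.mem_map, Polynomial.mem_degreeLT]
  constructor
  · rintro ⟨f, hf, rfl⟩
    exact ⟨f, hf, fun i => rfl⟩
  · rintro ⟨f, hf, hx⟩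
    exact ⟨f, hf, funext fun i => (hx i).symm⟩

lemma GRS_eq_range {n k : ℕ} (α ν : Fin n → F) :
    GRS k α ν = LinearMap.range ((evalMap α ν) ∘ₗ (Polynomial.degreeLT F k).subtype) := by
  rw [LinearMap.range_comp, Submodule.range_subtype]
  rfl

lemma finrank_GRS {n k : ℕ} (hkn : k ≤ n) (α ν : Fin n → F) (hα : Function.Injective α)
    (hν : ∀ i, ν i ≠ 0) : Module.finrank F (GRS k α ν : Submodule F (Fin n → F)) = k := by
  rw [GRS_eq_range]
  have hinj : Function.Injective ((evalMap α ν) ∘ₗ (Polynomial.degreeLT F k).subtype) := by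
    rintro ⟨f, hf⟩ ⟨g, hg⟩ hfg
    apply Subtype.ext
    have heval : ∀ i, ν i * f.eval (α i) = ν i * g.eval (α i) := fun i => congrFun hfg i
    have heval' : ∀ i, (f - g).eval (α i) = 0 := by
      intro i
      have := mul_left_cancel₀ (hν i) (heval i)
      simp [this]
    have hdeg : (f - g).degree < (n : WithBot ℕ) := by
      apply lt_of_lt_of_le (lt_of_le_of_lt (degree_sub_le f g) _)
        (le_refl _)
      exact max_lt (lt_of_lt_of_le (Polynomial.mem_degreeLT.1 hf) (by exact_mod_cast hkn))
        (lt_of_lt_of_le (Polynomial.mem_degreeLT.1 hg) (by exact_mod_cast hkn))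
    have := eval_eq_zero_poly α hα hdeg heval'
    exact sub_eq_zero.1 this
  rw [LinearMap.finrank_range_of_inj hinj]
  rw [(Polynomial.degreeLTEquiv F k).finrank_eq, Module.finrank_fin_fun]

/-- The standard dot product bilinear form. -/
noncomputable def dotForm (F : Type*) [Field F] (n : ℕ) : LinearMap.BilinForm F (Fin n → F) :=
  LinearMap.mk₂ F (fun x y => ∑ i, x i * y i)
    (fun x x' y => by simp [add_mul, Finset.sum_add_distrib])
    (fun c x y => by simp [Finset.mul_sum, mul_assoc])
    (fun x y y' => by simp [mul_add, Finset.sum_add_distrib])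
    (fun c x y => by simp [Finset.mul_sum, mul_left_comm])

lemma dualCode_eq_orthogonal {n : ℕ} (C : Submodule F (Fin n → F)) :
    dualCode C = (dotForm F n).orthogonal C := by
  ext x
  have h1 : x ∈ dualCode C ↔ ∀ c ∈ C, ∑ i, x i * c i = 0 := Iff.rfl
  rw [h1, LinearMap.BilinForm.mem_orthogonal_iff]
  constructor
  · intro hx c hc
    have := hx c hc
    simpa [LinearMap.BilinForm.IsOrtho, dotForm, mul_comm] using this
  · intro hx c hc
    have := hx c hc
    simpa [LinearMap.BilinForm.IsOrtho, dotForm, mul_comm] using this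

lemma dotForm_nondeg (n : ℕ) : (dotForm F n).Nondegenerate := by
  refine ⟨fun x hx => ?_, fun x hx => ?_⟩
  · funext j
    have := hx (Pi.single j 1)
    simpa [dotForm, Pi.single_apply, mul_ite, Finset.sum_ite_eq] using this
  · funext j
    have := hx (Pi.single j 1)
    simpa [dotForm, Pi.single_apply, ite_mul, Finset.sum_ite_eq] using this

lemma dotForm_refl (n : ℕ) : (dotForm F n).IsRefl := by
  intro x y h
  simpa [dotForm, mul_comm] using h

lemma finrank_dualCode {n : ℕ} (C : Submodule F (Fin n → F)) :
    Module.finrank F (dualCode C) = n - Module.finrank F C := by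
  rw [dualCode_eq_orthogonal,
    LinearMap.BilinForm.finrank_orthogonal (dotForm_nondeg n),
    Module.finrank_fin_fun]

lemma dualCode_GRS_eq {n k : ℕ} (hk : 0 < k) (hkn : k < n) (α : Fin n → F)
    (hα : Function.Injective α) :
    dualCode (GRS k α 1) =
      GRS (n - k) α (fun i => (∏ j ∈ Finset.univ.erase i, (α i - α j))⁻¹) := by
  set ω : Fin n → F := fun i => (∏ j ∈ Finset.univ.erase i, (α i - α j))⁻¹ with hω
  have hων : ∀ i, ω i = Lagrange.nodalWeight Finset.univ α i := by
    intro i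
    simp only [hω, Lagrange.nodalWeight, ← Finset.prod_inv_distrib]
  have hωne : ∀ i, ω i ≠ 0 := by
    intro i
    refine inv_ne_zero (Finset.prod_ne_zero_iff.2 fun j hj => ?_)
    exact sub_ne_zero_of_ne fun h => (mem_erase.1 hj).1 (hα h).symm
  have hle : GRS (n - k) α ω ≤ dualCode (GRS k α 1) := by
    intro x hx c hc
    obtain ⟨f, hf, hxf⟩ := (mem_GRS_iff α ω x).1 hx
    obtain ⟨g, hg, hcg⟩ := (mem_GRS_iff α 1 c).1 hc
    have key : ∑ i, Lagrange.nodalWeight Finset.univ α i * (f * g).eval (α i) = 0 := by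
      apply sum_nodalWeight_eval α hα
      rcases eq_or_ne f 0 with rfl | hf0
      · rw [zero_mul, degree_zero]
        exact WithBot.bot_lt_coe _
      rcases eq_or_ne g 0 with rfl | hg0
      · rw [mul_zero, degree_zero]
        exact WithBot.bot_lt_coe _
      rw [← natDegree_lt_iff_degree_lt (mul_ne_zero hf0 hg0)]
      have h1 : f.natDegree < n - k := (natDegree_lt_iff_degree_lt hf0).2 hf
      have h2 : g.natDegree < k := (natDegree_lt_iff_degree_lt hg0).2 hg
      have h3 := natDegree_mul_le (p := f) (q := g)
      omega
    calc ∑ i, x i * c i = ∑ i, Lagrange.nodalWeight Finset.univ α i * (f * g).eval (α i) := by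
          refine Finset.sum_congr rfl fun i _ => ?_
          rw [hxf i, hcg i, Pi.one_apply, hων i, eval_mul]
          ring
      _ = 0 := key
  have h1 : Module.finrank F (dualCode (GRS k α 1)) = n - k := by
    rw [finrank_dualCode, finrank_GRS hkn.le α 1 hα fun i => one_ne_zero]
  have h2 : Module.finrank F (GRS (n - k) α ω : Submodule F (Fin n → F)) = n - k :=
    finrank_GRS (Nat.sub_le n k) α ω hα hωne
  exact (Submodule.eq_of_le_of_finrank_le hle (by rw [h1, h2])).symm

end Aux

/-- Let `N = 2P + 2X + S - 1 ≤ q` and `α ∈ 𝔽_q^N` have distinct entries.  Then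
`RS_{P+2X-1}(α)^⊥ = GRS_{P+S}(α, ω)` and `RS_{P+2X}(α)^⊥ = GRS_{P+S-1}(α, ω)`,
and the former contains a nonzero codeword `λ` of Hamming weight exactly
`P + 2X` that is not in the latter. -/
theorem stmt15 {F : Type*} [Field F] [Fintype F] [DecidableEq F] {P X S : ℕ}
    (hP : 0 < P) (hX : 0 < X) (hS : 0 < S)
    (hq : 2 * P + 2 * X + S - 1 ≤ Fintype.card F)
    (α : Fin (2 * P + 2 * X + S - 1) → F) (hα : Function.Injective α) :
    dualCode (GRS (P + 2 * X - 1) α 1) =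
        GRS (P + S) α (fun i => (∏ j ∈ Finset.univ.erase i, (α i - α j))⁻¹) ∧
    dualCode (GRS (P + 2 * X) α 1) =
        GRS (P + S - 1) α (fun i => (∏ j ∈ Finset.univ.erase i, (α i - α j))⁻¹) ∧
    ∃ lam, lam ∈ GRS (P + S) α (fun i => (∏ j ∈ Finset.univ.erase i, (α i - α j))⁻¹) ∧
      lam ≠ 0 ∧ hammingNorm lam = P + 2 * X ∧
      lam ∉ GRS (P + S - 1) α (fun i => (∏ j ∈ Finset.univ.erase i, (α i - α j))⁻¹) := by
  set ω : Fin (2 * P + 2 * X + S - 1) → F :=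
    fun i => (∏ j ∈ Finset.univ.erase i, (α i - α j))⁻¹ with hω
  have hωne : ∀ i, ω i ≠ 0 := by
    intro i
    refine inv_ne_zero (Finset.prod_ne_zero_iff.2 fun j hj => ?_)
    exact sub_ne_zero_of_ne fun h => (Finset.mem_erase.1 hj).1 (hα h).symm
  have hd1 : dualCode (GRS (P + 2 * X - 1) α 1) = GRS (P + S) α ω := by
    have := dualCode_GRS_eq (n := 2 * P + 2 * X + S - 1) (k := P + 2 * X - 1)
      (by omega) (by omega) α hα
    rwa [show 2 * P + 2 * X + S - 1 - (P + 2 * X - 1) = P + S by omega] at this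
  have hd2 : dualCode (GRS (P + 2 * X) α 1) = GRS (P + S - 1) α ω := by
    have := dualCode_GRS_eq (n := 2 * P + 2 * X + S - 1) (k := P + 2 * X)
      (by omega) (by omega) α hα
    rwa [show 2 * P + 2 * X + S - 1 - (P + 2 * X) = P + S - 1 by omega] at this
  refine ⟨hd1, hd2, ?_⟩
  -- construct the codeword of weight P + 2X
  obtain ⟨T, -, hT⟩ := Finset.exists_subset_card_eq
    (show P + S - 1 ≤ (Finset.univ : Finset (Fin (2 * P + 2 * X + S - 1))).card by
      rw [Finset.card_univ, Fintype.card_fin]; omega)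
  set f : F[X] := ∏ j ∈ T, (Polynomial.X - C (α j)) with hf
  have hfmonic : f.Monic := monic_prod_of_monic _ _ fun j _ => monic_X_sub_C (α j)
  have hfdeg : f.natDegree = P + S - 1 := by
    rw [hf, natDegree_prod _ _ fun j _ => X_sub_C_ne_zero (α j)]
    simp [hT]
  have hfdeg' : f.degree = ((P + S - 1 : ℕ) : WithBot ℕ) := by
    rw [degree_eq_natDegree hfmonic.ne_zero, hfdeg]
  have heval : ∀ i, f.eval (α i) = ∏ j ∈ T, (α i - α j) := by
    intro i; simp [hf, eval_prod]
  have hevalT : ∀ i ∈ T, f.eval (α i) = 0 := by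
    intro i hi
    rw [heval]
    exact Finset.prod_eq_zero hi (sub_self (α i))
  have hevalnT : ∀ i, i ∉ T → f.eval (α i) ≠ 0 := by
    intro i hi
    rw [heval]
    refine Finset.prod_ne_zero_iff.2 fun j hj => ?_
    exact sub_ne_zero_of_ne fun h => hi (by rwa [hα h])
  set lam : Fin (2 * P + 2 * X + S - 1) → F := fun i => ω i * f.eval (α i) with hlam
  have hlamne : ∀ i, lam i ≠ 0 ↔ i ∉ T := by
    intro i
    constructor
    · intro h hi
      exact h (by rw [hlam]; simp [hevalT i hi])
    · intro hi
      exact mul_ne_zero (hωne i) (hevalnT i hi)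
  have hmem : lam ∈ GRS (P + S) α ω := by
    rw [mem_GRS_iff]
    refine ⟨f, ?_, fun i => rfl⟩
    rw [hfdeg']
    exact_mod_cast Nat.sub_lt (by omega) one_pos
  have hnorm : hammingNorm lam = P + 2 * X := by
    have : ({i | lam i ≠ 0} : Finset (Fin (2 * P + 2 * X + S - 1))) = Tᶜ := by
      ext i
      simp [hlamne i]
    rw [hammingNorm, this, Finset.card_compl, Fintype.card_fin, hT]
    omega
  have hlam0 : lam ≠ 0 := by
    intro h
    rw [h, hammingNorm_zero] at hnorm
    omega
  have hnot : lam ∉ GRS (P + S - 1) α ω := by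
    intro hmem'
    obtain ⟨g, hg, hlg⟩ := (mem_GRS_iff α ω lam).1 hmem'
    have hfg : ∀ i, (f - g).eval (α i) = 0 := by
      intro i
      have h1 : ω i * f.eval (α i) = ω i * g.eval (α i) := hlg i
      have := mul_left_cancel₀ (hωne i) h1
      simp [this]
    have hdeg : (f - g).degree < ((2 * P + 2 * X + S - 1 : ℕ) : WithBot ℕ) := by
      refine lt_of_le_of_lt (degree_sub_le f g) (max_lt ?_ ?_)
      · rw [hfdeg']
        exact_mod_cast (by omega : P + S - 1 < 2 * P + 2 * X + S - 1)
      · exact lt_of_lt_of_le hg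
          (by exact_mod_cast (by omega : P + S - 1 ≤ 2 * P + 2 * X + S - 1))
    have heq : f = g := sub_eq_zero.1 (eval_eq_zero_poly α hα hdeg hfg)
    rw [← heq, hfdeg'] at hg
    exact absurd hg (lt_irrefl _)
  exact ⟨lam, hmem, hlam0, hnorm, hnot⟩
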